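/- For the circle graph with N vertices, the determinant of the kinetic operator K (circulant N×N matrix with diagonal 2+m², entries -1 between cyclically adjacent vertices) equals 4 sinh²(βN/2), where sinh(β/2) = m/2. -/

import Mathlib

open Matrix Equiv Finset
open Fin.CommRing Fin.NatCast

variable {n : ℕ}

private lemma fin_one_ne_zero' : (1 : Fin (n+3)) ≠ 0 := by
  simp [Fin.ext_iff]

private lemma fin_two_ne_zero' : (1 + 1 : Fin (n+3)) ≠ 0 := by
  intro h
  have h2 := congrArg Fin.val h
  have vadd : ((1 + 1 : Fin (n+3))).val = ((1 : Fin (n+3)).val + (1 : Fin (n+3)).val) % (n+3) :=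
    Fin.val_add _ _
  have v1 : (1 : Fin (n+3)).val = 1 := Fin.val_one _
  have v0 : (0 : Fin (n+3)).val = 0 := rfl
  rw [vadd, v1, v0] at h2
  rw [Nat.mod_eq_of_lt (by omega)] at h2
  omega

private lemma fin_two_ne_one' : (1 + 1 : Fin (n+3)) ≠ 1 := by
  intro h
  exact fin_one_ne_zero' (by linear_combination h)

private lemma fin_neg_one_ne_zero' : (-1 : Fin (n+3)) ≠ 0 := by
  simp [neg_eq_zero, fin_one_ne_zero']

private lemma fin_neg_one_ne_one' : (-1 : Fin (n+3)) ≠ 1 := by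
  intro h
  exact fin_two_ne_zero' (by linear_combination -h)

private lemma perm_classify (σ : Equiv.Perm (Fin (n+3)))
    (h : ∀ i, σ i = i ∨ σ i = i + 1) :
    σ = 1 ∨ σ = finRotate (n+3) := by
  by_cases hex : ∃ i, σ i = i + 1
  · right
    obtain ⟨i0, hi0⟩ := hex
    have key : ∀ k : ℕ, σ (i0 + (k : Fin (n+3))) = i0 + (k : Fin (n+3)) + 1 := by
      intro k
      induction k with
      | zero => simpa using hi0
      | succ k ih =>
        have hc : ((k+1 : ℕ) : Fin (n+3)) = ((k : ℕ) : Fin (n+3)) + 1 := by push_cast; ring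
        rw [hc, ← add_assoc]
        rcases h (i0 + ((k : ℕ) : Fin (n+3)) + 1) with h1 | h1
        · exfalso
          have h2 : σ (i0 + ((k : ℕ) : Fin (n+3)) + 1) = σ (i0 + ((k : ℕ) : Fin (n+3))) := by
            rw [h1, ih]
          have h3 := σ.injective h2
          have : (1 : Fin (n+3)) = 0 := by linear_combination h3
          exact fin_one_ne_zero' this
        · exact h1
    refine Equiv.ext fun j => ?_
    have hj : i0 + (((j - i0).val : ℕ) : Fin (n+3)) = j := by
      rw [Fin.cast_val_eq_self]; abel
    have := key (j - i0).val
    rw [hj] at this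
    rw [this]
    exact (finRotate_succ_apply j).symm
  · left
    refine Equiv.ext fun j => ?_
    rcases h j with h1 | h1
    · simpa using h1
    · exact absurd ⟨j, h1⟩ hex

private lemma circ_det (a : ℝ) :
    (Matrix.circulant (fun k : Fin (n+3) => if k = 0 then a else if k = 1 then -1 else 0)).det
      = a^(n+3) - 1 := by
  set f : Fin (n+3) → ℝ := fun k => if k = 0 then a else if k = 1 then -1 else 0 with hf
  rw [Matrix.det_apply']
  have hzero : ∀ σ ∈ (Finset.univ : Finset (Equiv.Perm (Fin (n+3)))),
      σ ∉ ({1, finRotate (n+3)} : Finset (Equiv.Perm (Fin (n+3)))) →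
      (Equiv.Perm.sign σ : ℝ) * ∏ i, Matrix.circulant f (σ i) i = 0 := by
    intro σ _ hσ
    have hprod : ∏ i, Matrix.circulant f (σ i) i = 0 := by
      by_contra hne
      have hall : ∀ i, σ i = i ∨ σ i = i + 1 := by
        intro i
        have hfac : f (σ i - i) ≠ 0 := by
          intro h0
          exact hne (Finset.prod_eq_zero (Finset.mem_univ i) (by rw [Matrix.circulant_apply, h0]))
        by_contra hcon
        push_neg at hcon
        have h1 : σ i - i ≠ 0 := fun h => hcon.1 (by linear_combination h)
        have h2 : σ i - i ≠ 1 := fun h => hcon.2 (by linear_combination h)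
        exact hfac (by simp [hf, h1, h2])
      rcases perm_classify σ hall with h | h <;>
        simp [h, Finset.mem_insert, Finset.mem_singleton] at hσ
    rw [hprod, mul_zero]
  rw [← Finset.sum_subset (Finset.subset_univ ({1, finRotate (n+3)} : Finset (Equiv.Perm (Fin (n+3))))) hzero]
  have hne : (1 : Equiv.Perm (Fin (n+3))) ≠ finRotate (n+3) := by
    intro h
    have h0 := Equiv.ext_iff.mp h 0
    simp [finRotate_succ_apply] at h0
  rw [Finset.sum_insert (by simpa using hne), Finset.sum_singleton]
  have e1 : (Equiv.Perm.sign (1 : Equiv.Perm (Fin (n+3))) : ℝ) * ∏ i, Matrix.circulant f ((1 : Equiv.Perm (Fin (n+3))) i) i = a^(n+3) := by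
    simp only [Equiv.Perm.sign_one, Equiv.Perm.one_apply, Matrix.circulant_apply, sub_self]
    simp [hf, Finset.prod_const]
  have e2 : (Equiv.Perm.sign (finRotate (n+3)) : ℝ) * ∏ i, Matrix.circulant f ((finRotate (n+3)) i) i = -1 := by
    have hs : (Equiv.Perm.sign (finRotate (n+3)) : ℝ) = (-1)^(n+2) := by
      rw [sign_finRotate]; push_cast; ring
    have hp : ∏ i, Matrix.circulant f ((finRotate (n+3)) i) i = (-1)^(n+3) := by
      have : ∀ i : Fin (n+3), Matrix.circulant f ((finRotate (n+3)) i) i = -1 := by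
        intro i
        rw [Matrix.circulant_apply, finRotate_succ_apply]
        have : i + 1 - i = 1 := by ring
        rw [this]
        simp [hf, fin_one_ne_zero']
      rw [Finset.prod_congr rfl (fun i _ => this i)]
      simp [Finset.prod_const]
    rw [hs, hp, ← pow_add]
    have : Odd (n + 2 + (n + 3)) := ⟨n + 2, by ring⟩
    rw [this.neg_one_pow]
  rw [e1, e2]; ring

private lemma mulVec_shift (w : Fin (n+3) → ℝ) :
    Matrix.circulant (fun k : Fin (n+3) => if k = -1 then (1:ℝ) else 0) *ᵥ w
      = fun k => w (k + 1) := by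
  funext k
  simp only [Matrix.mulVec, dotProduct, Matrix.circulant_apply]
  have hc : ∀ j : Fin (n+3), ((if k - j = -1 then (1:ℝ) else 0) * w j)
      = if j = k + 1 then w j else 0 := by
    intro j
    have hiff : (k - j = -1) ↔ (j = k + 1) := by
      constructor <;> intro h <;> linear_combination -h
    simp only [hiff]
    split_ifs <;> simp
  rw [Finset.sum_congr rfl (fun j _ => hc j),
    Finset.sum_ite_eq' Finset.univ (k+1) w]
  simp

private lemma conv_ab (a b : ℝ) :
    (Matrix.circulant (fun k : Fin (n+3) => if k = 0 then a else if k = 1 then -1 else 0) *ᵥ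
      (fun k : Fin (n+3) => if k = 0 then b else if k = 1 then -1 else 0))
    = fun k : Fin (n+3) => if k = 0 then a*b else if k = 1 then -(a+b)
        else if k = 1+1 then 1 else 0 := by
  funext k
  set f : Fin (n+3) → ℝ := fun k => if k = 0 then a else if k = 1 then (-1:ℝ) else 0 with hf
  simp only [Matrix.mulVec, dotProduct, Matrix.circulant_apply]
  have hc : ∀ j : Fin (n+3), f (k - j) * (if j = 0 then b else if j = 1 then -1 else 0)
      = (if j = 0 then f k * b else 0) + (if j = 1 then -(f (k-1)) else 0) := by
    intro j
    by_cases h0 : j = 0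
    · subst h0
      rw [if_pos rfl, if_pos rfl, if_neg (Ne.symm fin_one_ne_zero'), sub_zero, add_zero]
    · by_cases h1 : j = 1
      · subst h1
        rw [if_neg h0, if_neg h0, if_pos rfl, if_pos rfl, zero_add]
        ring
      · rw [if_neg h0, if_neg h1, if_neg h0, if_neg h1, mul_zero, add_zero]
  rw [Finset.sum_congr rfl (fun j _ => hc j), Finset.sum_add_distrib,
    Finset.sum_ite_eq' Finset.univ (0 : Fin (n+3)) (fun _ => f k * b),
    Finset.sum_ite_eq' Finset.univ (1 : Fin (n+3)) (fun _ => -(f (k-1)))]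
  simp only [Finset.mem_univ, if_true]
  by_cases hk0 : k = 0
  · subst hk0
    have hm1 : (0 : Fin (n+3)) - 1 = -1 := by ring
    simp only [hf, hm1, if_pos rfl, if_neg fin_neg_one_ne_zero', if_neg fin_neg_one_ne_one']
    simp [Ne.symm fin_one_ne_zero', Ne.symm fin_two_ne_zero', Ne.symm fin_two_ne_one']
    try ring
  · by_cases hk1 : k = 1
    · subst hk1
      simp only [hf, sub_self, if_pos rfl, if_neg hk0, if_neg fin_one_ne_zero']
      simp [Ne.symm fin_one_ne_zero', fin_two_ne_one']
      try ring
    · by_cases hk2 : k = 1+1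
      · subst hk2
        have h11 : (1 + 1 : Fin (n+3)) - 1 = 1 := by ring
        simp only [hf, h11, if_pos rfl, if_neg fin_two_ne_zero', if_neg fin_two_ne_one',
          if_neg fin_one_ne_zero']
        simp
        try ring
      · have hs0 : k - 1 ≠ 0 := fun h => hk1 (by linear_combination h)
        have hs1 : k - 1 ≠ 1 := fun h => hk2 (by linear_combination h)
        simp only [hf, if_neg hk0, if_neg hk1, if_neg hk2, if_neg hs0, if_neg hs1]
        ring

/-- Determinant of the kinetic operator of the circle graph with `N` vertices:
`det K = 4 sinh²(βN/2)`, where `sinh(β/2) = m/2`. -/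
theorem stmt_13 (N : ℕ) (hN : 3 ≤ N) (m β : ℝ) (hm : 0 < m) (hβ : 0 < β)
    (hsinh : Real.sinh (β / 2) = m / 2)
    (K : Matrix (Fin N) (Fin N) ℝ)
    (hK : K = Matrix.of fun (i j : Fin N) =>
      if i = j then 2 + m^2
      else if ((i : ℕ) + 1) % N = (j : ℕ) ∨ ((j : ℕ) + 1) % N = (i : ℕ) then -1 else 0) :
    K.det = 4 * (Real.sinh (β * (N : ℝ) / 2))^2 := by
  obtain ⟨n, rfl⟩ : ∃ n, N = n + 3 := ⟨N - 3, by omega⟩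
  subst hK
  set a := Real.exp β with ha
  set b := Real.exp (-β) with hb
  have hab : a * b = 1 := by rw [ha, hb, ← Real.exp_add]; simp
  have hab2 : a + b = 2 + m^2 := by
    have hu : Real.exp (β/2) - Real.exp (-(β/2)) = m := by
      have h := Real.sinh_eq (β/2)
      rw [hsinh] at h
      linarith
    have ha2 : a = Real.exp (β/2) * Real.exp (β/2) := by
      rw [ha, ← Real.exp_add]; congr 1; ring
    have hb2 : b = Real.exp (-(β/2)) * Real.exp (-(β/2)) := by
      rw [hb, ← Real.exp_add]; congr 1; ring
    have huv : Real.exp (β/2) * Real.exp (-(β/2)) = 1 := by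
      rw [← Real.exp_add]; simp
    rw [ha2, hb2]
    nlinarith [hu, huv]
  set c : Fin (n+3) → ℝ :=
    fun k => if k = 0 then 2 + m^2 else if k = 1 ∨ k = -1 then (-1:ℝ) else 0 with hcdef
  have hKc : (Matrix.of fun (i j : Fin (n+3)) =>
      if i = j then 2 + m^2
      else if ((i : ℕ) + 1) % (n+3) = (j : ℕ) ∨ ((j : ℕ) + 1) % (n+3) = (i : ℕ) then -1 else 0)
      = Matrix.circulant c := by
    ext i j
    rw [Matrix.circulant_apply, Matrix.of_apply]
    have hadd : ∀ x y : Fin (n+3), (((x:ℕ) + 1) % (n+3) = (y:ℕ)) ↔ x + 1 = y := by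
      intro x y
      have hv : (x + 1).val = ((x:ℕ) + 1) % (n+3) := by
        rw [Fin.val_add, Fin.val_one]
      constructor
      · intro h
        exact Fin.val_injective (by rw [hv, h])
      · intro h
        rw [← hv, h]
    by_cases hij : i = j
    · subst hij
      rw [if_pos rfl, hcdef]
      simp [sub_self]
    · have hsub : i - j ≠ 0 := fun h => hij (by linear_combination h)
      rw [if_neg hij, hcdef]
      simp only [if_neg hsub]
      have e1 : (((i:ℕ) + 1) % (n+3) = (j:ℕ)) ↔ i - j = -1 := by
        rw [hadd]
        constructor <;> intro h <;> linear_combination h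
      have e2 : (((j:ℕ) + 1) % (n+3) = (i:ℕ)) ↔ i - j = 1 := by
        rw [hadd]
        constructor <;> intro h <;> linear_combination -h
      simp only [e1, e2, or_comm]
  rw [hKc]
  set fa : Fin (n+3) → ℝ := fun k => if k = 0 then a else if k = 1 then (-1:ℝ) else 0 with hfa
  set fb : Fin (n+3) → ℝ := fun k => if k = 0 then b else if k = 1 then (-1:ℝ) else 0 with hfb
  set d : Fin (n+3) → ℝ := fun k => if k = -1 then (1:ℝ) else 0 with hd
  have hfac : Matrix.circulant d * (Matrix.circulant fa * Matrix.circulant fb)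
      = -Matrix.circulant c := by
    rw [Matrix.circulant_mul (v := fa) (w := fb), hfa, hfb, conv_ab,
      Matrix.circulant_mul, hd, mulVec_shift]
    rw [show (fun k : Fin (n+3) =>
        (fun k : Fin (n+3) => if k = 0 then a*b else if k = 1 then -(a+b)
          else if k = 1+1 then (1:ℝ) else 0) (k+1)) = -c from ?_, Matrix.circulant_neg]
    funext k
    simp only [Pi.neg_apply, hcdef]
    by_cases hk0 : k = -1
    · subst hk0
      have h0 : (-1 : Fin (n+3)) + 1 = 0 := by ring
      rw [h0, if_pos rfl, if_neg fin_neg_one_ne_zero',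
        if_pos (Or.inr rfl), hab]
      ring
    · by_cases hk1 : k = 0
      · subst hk1
        rw [zero_add, if_neg fin_one_ne_zero', if_pos rfl, if_pos rfl, hab2]
      · by_cases hk2 : k = 1
        · subst hk2
          rw [if_neg fin_two_ne_zero', if_neg fin_two_ne_one', if_pos rfl,
            if_neg fin_one_ne_zero', if_pos (Or.inl rfl)]
          ring
        · have h0 : k + 1 ≠ 0 := fun h => hk0 (by linear_combination h)
          have h1 : k + 1 ≠ 1 := fun h => hk1 (by linear_combination h)
          have h2 : k + 1 ≠ 1 + 1 := fun h => hk2 (by linear_combination h)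
          have h3 : ¬ (k = 1 ∨ k = -1) := by
            rintro (h | h)
            · exact hk2 h
            · exact hk0 h
          rw [if_neg h0, if_neg h1, if_neg h2, if_neg hk1, if_neg h3]
          ring
  have hdetd : (Matrix.circulant d).det = (-1:ℝ)^(n+2) := by
    have hP : Matrix.circulant d = Equiv.Perm.permMatrix ℝ (finRotate (n+3)) := by
      ext i j
      rw [Matrix.circulant_apply, Equiv.Perm.permMatrix,
        PEquiv.toMatrix_toPEquiv_eq, Matrix.submatrix_apply, id_eq, Matrix.one_apply]
      have : (finRotate (n+3)) i = i + 1 := finRotate_succ_apply i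
      rw [this, hd]
      have hiff : (i - j = -1) ↔ (i + 1 = j) := by
        constructor <;> intro h <;> linear_combination h
      simp only [hiff]
    rw [hP, Matrix.det_permutation, sign_finRotate]
    push_cast
    ring
  have hdeta : (Matrix.circulant fa).det = a^(n+3) - 1 := by
    rw [hfa]; exact circ_det (n := n) a
  have hdetb : (Matrix.circulant fb).det = b^(n+3) - 1 := by
    rw [hfb]; exact circ_det (n := n) b
  have hD := congrArg Matrix.det hfac
  rw [Matrix.det_mul, Matrix.det_mul, Matrix.det_neg, hdetd, hdeta, hdetb,
    Fintype.card_fin] at hD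
  have habN : a^(n+3) * b^(n+3) = 1 := by rw [← mul_pow, hab, one_pow]
  have hdet : (Matrix.circulant c).det = a^(n+3) + b^(n+3) - 2 := by
    have hodd : (-1:ℝ)^(n+2) * (-1)^(n+3) = -1 := by
      rw [← pow_add]
      exact Odd.neg_one_pow ⟨n+2, by ring⟩
    have hsq : (-1:ℝ)^(n+3) * (-1)^(n+3) = 1 := by
      rw [← pow_add]
      exact Even.neg_one_pow ⟨n+3, by ring⟩
    have hDP : (Matrix.circulant c).det = -((a^(n+3)-1) * (b^(n+3)-1)) :=
      calc (Matrix.circulant c).det = 1 * (Matrix.circulant c).det := (one_mul _).symm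
      _ = ((-1:ℝ)^(n+3) * (-1)^(n+3)) * (Matrix.circulant c).det := by rw [hsq]
      _ = (-1:ℝ)^(n+3) * ((-1:ℝ)^(n+3) * (Matrix.circulant c).det) := by ring
      _ = (-1:ℝ)^(n+3) * ((-1:ℝ)^(n+2) * ((a^(n+3)-1) * (b^(n+3)-1))) := by rw [hD]
      _ = ((-1:ℝ)^(n+2) * (-1:ℝ)^(n+3)) * ((a^(n+3)-1) * (b^(n+3)-1)) := by ring
      _ = -((a^(n+3)-1) * (b^(n+3)-1)) := by rw [hodd]; ring
    linear_combination hDP - habN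
  rw [hdet]
  have hu2 : a^(n+3) = Real.exp (β * ((n:ℝ)+3) / 2) ^ 2 := by
    rw [ha, ← Real.exp_nat_mul, sq, ← Real.exp_add]
    congr 1
    push_cast
    ring
  have hv2 : b^(n+3) = Real.exp (-(β * ((n:ℝ)+3) / 2)) ^ 2 := by
    rw [hb, ← Real.exp_nat_mul, sq, ← Real.exp_add]
    congr 1
    push_cast
    ring
  have huv : Real.exp (β * ((n:ℝ)+3) / 2) * Real.exp (-(β * ((n:ℝ)+3) / 2)) = 1 := by
    rw [← Real.exp_add]; simp
  have hcast : (((n+3 : ℕ)) : ℝ) = (n:ℝ) + 3 := by push_cast; ring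
  rw [hcast, Real.sinh_eq, hu2, hv2]
  linear_combination 2 * huv
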